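/- arXiv:1012.2793 — 3 statements merged into one kernel-verified Lean document; each statement's English description precedes it below -/
import Mathlib

section
/- Let L be the subgroup of SL₂(ℤ) generated by the four matrices [[1,3],[0,1]], [[1,−3],[0,1]], [[1,0],[3,1]], [[1,0],[−3,1]]. Then for every prime p ≠ 3, the reduction map L → SL₂(ℤ/pℤ) is surjective. -/
/-- The matrix `[[1,3],[0,1]]` as an element of `SL₂(ℤ)`. -/
def lubGen₁ : Matrix.SpecialLinearGroup (Fin 2) ℤ :=
  ⟨!![1, 3; 0, 1], by norm_num [Matrix.det_fin_two_of]⟩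

/-- The matrix `[[1,-3],[0,1]]` as an element of `SL₂(ℤ)`. -/
def lubGen₂ : Matrix.SpecialLinearGroup (Fin 2) ℤ :=
  ⟨!![1, -3; 0, 1], by norm_num [Matrix.det_fin_two_of]⟩

/-- The matrix `[[1,0],[3,1]]` as an element of `SL₂(ℤ)`. -/
def lubGen₃ : Matrix.SpecialLinearGroup (Fin 2) ℤ :=
  ⟨!![1, 0; 3, 1], by norm_num [Matrix.det_fin_two_of]⟩

/-- The matrix `[[1,0],[-3,1]]` as an element of `SL₂(ℤ)`. -/
def lubGen₄ : Matrix.SpecialLinearGroup (Fin 2) ℤ :=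
  ⟨!![1, 0; -3, 1], by norm_num [Matrix.det_fin_two_of]⟩

/-- The "Lubotzky group" `L ⊆ SL₂(ℤ)` generated by the four matrices
`[[1,±3],[0,1]]` and `[[1,0],[±3,1]]`. -/
def lubotzkyGroup : Subgroup (Matrix.SpecialLinearGroup (Fin 2) ℤ) :=
  Subgroup.closure {lubGen₁, lubGen₂, lubGen₃, lubGen₄}

private def lubU {R : Type*} [CommRing R] (t : R) : Matrix.SpecialLinearGroup (Fin 2) R :=
  ⟨!![1, t; 0, 1], by simp [Matrix.det_fin_two_of]⟩
private def lubL {R : Type*} [CommRing R] (t : R) : Matrix.SpecialLinearGroup (Fin 2) R :=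
  ⟨!![1, 0; t, 1], by simp [Matrix.det_fin_two_of]⟩

private lemma lubU_coe {R : Type*} [CommRing R] (t : R) :
    ((lubU t : Matrix.SpecialLinearGroup (Fin 2) R) : Matrix (Fin 2) (Fin 2) R) = !![1, t; 0, 1] := rfl
private lemma lubL_coe {R : Type*} [CommRing R] (t : R) :
    ((lubL t : Matrix.SpecialLinearGroup (Fin 2) R) : Matrix (Fin 2) (Fin 2) R) = !![1, 0; t, 1] := rfl
private lemma lubGen₁_coe : ((lubGen₁ : Matrix.SpecialLinearGroup (Fin 2) ℤ) : Matrix (Fin 2) (Fin 2) ℤ) = !![1, 3; 0, 1] := rfl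
private lemma lubGen₃_coe : ((lubGen₃ : Matrix.SpecialLinearGroup (Fin 2) ℤ) : Matrix (Fin 2) (Fin 2) ℤ) = !![1, 0; 3, 1] := rfl

private lemma lubU_mul {R : Type*} [CommRing R] (a b : R) : lubU a * lubU b = lubU (a + b) := by
  ext i j
  fin_cases i <;> fin_cases j <;> simp [lubU_coe, Matrix.mul_fin_two, add_comm]

private lemma lubL_mul {R : Type*} [CommRing R] (a b : R) : lubL a * lubL b = lubL (a + b) := by
  ext i j
  fin_cases i <;> fin_cases j <;> simp [lubL_coe, Matrix.mul_fin_two, add_comm]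

private lemma lubU_pow {R : Type*} [CommRing R] (a : R) (n : ℕ) : (lubU a) ^ n = lubU (n * a) := by
  induction n with
  | zero => ext i j; fin_cases i <;> fin_cases j <;> simp [lubU_coe]
  | succ n ih => rw [pow_succ, ih, lubU_mul]; push_cast; ring_nf

private lemma lubL_pow {R : Type*} [CommRing R] (a : R) (n : ℕ) : (lubL a) ^ n = lubL (n * a) := by
  induction n with
  | zero => ext i j; fin_cases i <;> fin_cases j <;> simp [lubL_coe]
  | succ n ih => rw [pow_succ, ih, lubL_mul]; push_cast; ring_nf

theorem stmt3 (p : ℕ) (hp : p.Prime) (hp3 : p ≠ 3) :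
    Function.Surjective
      (fun γ : lubotzkyGroup =>
        Matrix.SpecialLinearGroup.map (Int.castRingHom (ZMod p))
          (γ : Matrix.SpecialLinearGroup (Fin 2) ℤ)) := by
  haveI : Fact p.Prime := ⟨hp⟩
  set f := Matrix.SpecialLinearGroup.map (n := Fin 2) (Int.castRingHom (ZMod p)) with hf
  set H := Subgroup.map f lubotzkyGroup with hH
  have h3 : (3 : ZMod p) ≠ 0 := by
    intro h
    have : ((3 : ℕ) : ZMod p) = 0 := by exact_mod_cast h
    rw [ZMod.natCast_eq_zero_iff] at this
    exact hp3 ((Nat.prime_dvd_prime_iff_eq hp (by norm_num)).mp this)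
  -- f lubGen₁ = lubU 3, f lubGen₃ = lubL 3
  have hg1 : f lubGen₁ = lubU (3 : ZMod p) := by
    ext i j; fin_cases i <;> fin_cases j <;> simp [hf, lubGen₁_coe, lubU_coe]
  have hg3 : f lubGen₃ = lubL (3 : ZMod p) := by
    ext i j; fin_cases i <;> fin_cases j <;> simp [hf, lubGen₃_coe, lubL_coe]
  have hmem1 : lubU (3 : ZMod p) ∈ H := by
    rw [← hg1]
    exact ⟨lubGen₁, Subgroup.subset_closure (by simp), rfl⟩
  have hmem3 : lubL (3 : ZMod p) ∈ H := by
    rw [← hg3]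
    exact ⟨lubGen₃, Subgroup.subset_closure (by simp), rfl⟩
  have hU : ∀ t : ZMod p, lubU t ∈ H := by
    intro t
    have := H.pow_mem hmem1 (t * (3 : ZMod p)⁻¹).val
    rwa [lubU_pow, ZMod.natCast_val, ZMod.cast_id,
      show t * (3 : ZMod p)⁻¹ * 3 = t by field_simp] at this
  have hL : ∀ t : ZMod p, lubL t ∈ H := by
    intro t
    have := H.pow_mem hmem3 (t * (3 : ZMod p)⁻¹).val
    rwa [lubL_pow, ZMod.natCast_val, ZMod.cast_id,
      show t * (3 : ZMod p)⁻¹ * 3 = t by field_simp] at this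
  have key : ∀ M : Matrix.SpecialLinearGroup (Fin 2) (ZMod p),
      (M : Matrix (Fin 2) (Fin 2) (ZMod p)) 1 0 ≠ 0 → M ∈ H := by
    intro M hc
    set a := (M : Matrix (Fin 2) (Fin 2) (ZMod p)) 0 0 with ha
    set b := (M : Matrix (Fin 2) (Fin 2) (ZMod p)) 0 1 with hb
    set c := (M : Matrix (Fin 2) (Fin 2) (ZMod p)) 1 0 with hcv
    set d := (M : Matrix (Fin 2) (Fin 2) (ZMod p)) 1 1 with hd
    have hdet : a * d - b * c = 1 := by
      have := M.2
      rw [Matrix.det_fin_two] at this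
      linear_combination this
    have hMeq : M = lubU ((a - 1) / c) * lubL c * lubU ((d - 1) / c) := by
      ext i j
      fin_cases i <;> fin_cases j <;>
        simp [lubU_coe, lubL_coe, Matrix.mul_fin_two, ← ha, ← hb, ← hcv, ← hd] <;>
        field_simp <;>
        first
          | linear_combination hdet
          | linear_combination (-2 : ZMod p) * hdet
          | linear_combination (2 : ZMod p) * hdet
          | linear_combination -hdet
          | ring
    rw [hMeq]
    exact H.mul_mem (H.mul_mem (hU _) (hL _)) (hU _)
  have full : ∀ M : Matrix.SpecialLinearGroup (Fin 2) (ZMod p), M ∈ H := by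
    intro M
    by_cases hc : (M : Matrix (Fin 2) (Fin 2) (ZMod p)) 1 0 ≠ 0
    · exact key M hc
    · push_neg at hc
      have ha : (M : Matrix (Fin 2) (Fin 2) (ZMod p)) 0 0 ≠ 0 := by
        intro h0
        have := M.2
        rw [Matrix.det_fin_two] at this
        rw [h0, hc] at this
        simp at this
      have h1 : ((lubL 1 * M : Matrix.SpecialLinearGroup (Fin 2) (ZMod p)) :
          Matrix (Fin 2) (Fin 2) (ZMod p)) 1 0 ≠ 0 := by
        have : ((lubL 1 * M : Matrix.SpecialLinearGroup (Fin 2) (ZMod p)) :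
            Matrix (Fin 2) (Fin 2) (ZMod p)) 1 0
            = (M : Matrix (Fin 2) (Fin 2) (ZMod p)) 0 0
              + (M : Matrix (Fin 2) (Fin 2) (ZMod p)) 1 0 := by
          simp [lubL_coe, Matrix.mul_apply, Fin.sum_univ_succ]
        rw [this, hc, add_zero]
        exact ha
      have := key _ h1
      have hM : M = (lubL 1)⁻¹ * (lubL 1 * M) := by group
      rw [hM]
      exact H.mul_mem (H.inv_mem (hL 1)) this
  intro M
  obtain ⟨γ, hγ, hfγ⟩ := full M
  exact ⟨⟨γ, hγ⟩, hfγ⟩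
end

section
/- Let L be the subgroup of SL₂(ℤ) generated by the four matrices [[1,3],[0,1]], [[1,−3],[0,1]], [[1,0],[3,1]], [[1,0],[−3,1]]. Then for every squarefree positive integer d not divisible by 3, the reduction map L → SL₂(ℤ/dℤ) is surjective; equivalently, the simultaneous reduction map L → ∏_{p | d} SL₂(ℤ/pℤ) over the primes p dividing d is surjective. -/
section LubAux

open Matrix

variable {R : Type*} [CommRing R]

/-- elementary matrix [[1,x],[0,1]] -/
def eE (x : R) : Matrix.SpecialLinearGroup (Fin 2) R :=
  ⟨!![1, x; 0, 1], by simp [Matrix.det_fin_two_of]⟩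

def eF (x : R) : Matrix.SpecialLinearGroup (Fin 2) R :=
  ⟨!![1, 0; x, 1], by simp [Matrix.det_fin_two_of]⟩

lemma eE_mul (x y : R) : eE x * eE y = eE (x + y) := by
  apply Subtype.ext
  rw [Matrix.SpecialLinearGroup.coe_mul]
  simp [eE, Matrix.SpecialLinearGroup.coe_mul, Matrix.mul_fin_two]
  ring

lemma eE_zero : (eE (0:R)) = 1 := by
  apply Subtype.ext
  simp [eE]
  exact (Matrix.one_fin_two).symm

lemma eE_inv (x : R) : (eE x)⁻¹ = eE (-x) := by
  apply inv_eq_of_mul_eq_one_right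
  rw [eE_mul]; simp [eE_zero]

lemma eE_zpow (x : R) : ∀ n : ℤ, (eE x) ^ n = eE (n * x) := by
  intro n
  induction n using Int.induction_on with
  | zero => rw [zpow_zero, Int.cast_zero, zero_mul, eE_zero]
  | succ n ih => rw [_root_.zpow_add_one, ih, eE_mul]; congr 1; push_cast; ring
  | pred n ih => rw [_root_.zpow_sub_one, ih, eE_inv, eE_mul]; congr 1; push_cast; ring

lemma eF_mul (x y : R) : eF x * eF y = eF (x + y) := by
  apply Subtype.ext
  rw [Matrix.SpecialLinearGroup.coe_mul]
  simp [eF, Matrix.SpecialLinearGroup.coe_mul, Matrix.mul_fin_two]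

lemma eF_zero : (eF (0:R)) = 1 := by
  apply Subtype.ext
  simp [eF]
  exact (Matrix.one_fin_two).symm

lemma eF_inv (x : R) : (eF x)⁻¹ = eF (-x) := by
  apply inv_eq_of_mul_eq_one_right
  rw [eF_mul]; simp [eF_zero]

lemma eF_zpow (x : R) : ∀ n : ℤ, (eF x) ^ n = eF (n * x) := by
  intro n
  induction n using Int.induction_on with
  | zero => rw [zpow_zero, Int.cast_zero, zero_mul, eF_zero]
  | succ n ih => rw [_root_.zpow_add_one, ih, eF_mul]; congr 1; push_cast; ring
  | pred n ih => rw [_root_.zpow_sub_one, ih, eF_inv, eF_mul]; congr 1; push_cast; ring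

/-- Key arithmetic lemma: if d is squarefree and (a,c) is unimodular mod d,
some `a + t*c` is a unit. -/
lemma exists_add_mul_isUnit (d : ℕ) (hd : 0 < d) (hsf : Squarefree d)
    (a c : ZMod d) (h : IsCoprime a c) : ∃ t : ZMod d, IsUnit (a + t * c) := by
  haveI : NeZero d := ⟨hd.ne'⟩
  set A := a.val with hA
  set C := c.val with hC
  -- key: no prime divides d, A, C simultaneously
  have hkey : ∀ p : ℕ, p.Prime → p ∣ d → ¬ (p ∣ A ∧ p ∣ C) := by
    rintro p hp hpd ⟨hpA, hpC⟩
    obtain ⟨x, y, hxy⟩ := h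
    haveI : Fact p.Prime := ⟨hp⟩
    have := congrArg (ZMod.castHom hpd (ZMod p)) hxy
    rw [_root_.map_add, _root_.map_mul, _root_.map_mul, _root_.map_one] at this
    have ha0 : (ZMod.castHom hpd (ZMod p)) a = 0 := by
      have : a = (A : ZMod d) := (ZMod.natCast_rightInverse a).symm
      rw [this, map_natCast, ZMod.natCast_eq_zero_iff]
      exact hpA
    have hc0 : (ZMod.castHom hpd (ZMod p)) c = 0 := by
      have : c = (C : ZMod d) := (ZMod.natCast_rightInverse c).symm
      rw [this, map_natCast, ZMod.natCast_eq_zero_iff]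
      exact hpC
    rw [ha0, hc0, mul_zero, mul_zero, add_zero] at this
    exact zero_ne_one this
  set T : ℕ := (d.primeFactors.filter (fun p => ¬ p ∣ A)).prod id with hT
  refine ⟨(T : ZMod d), ?_⟩
  have : a + (T : ZMod d) * c = ((A + T * C : ℕ) : ZMod d) := by
    push_cast
    rw [hA, hC, ZMod.natCast_rightInverse a, ZMod.natCast_rightInverse c]
  rw [this, ZMod.isUnit_iff_coprime]
  -- show Nat.Coprime (A + T*C) d
  rw [Nat.coprime_comm]
  by_contra hnc
  obtain ⟨p, hp, hpg⟩ := Nat.exists_prime_and_dvd hnc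
  have hpd : p ∣ d := hpg.trans (Nat.gcd_dvd_left _ _)
  have hpm : p ∣ A + T * C := hpg.trans (Nat.gcd_dvd_right _ _)
  by_cases hpA : p ∣ A
  · have hpC : ¬ p ∣ C := fun hc => hkey p hp hpd ⟨hpA, hc⟩
    have hpT : ¬ p ∣ T := by
      intro hdvd
      rw [hT] at hdvd
      obtain ⟨q, hq, hpq⟩ := hp.prime.exists_mem_finset_dvd hdvd
      simp only [Finset.mem_filter, Nat.mem_primeFactors] at hq
      have : p = q := ((Nat.prime_dvd_prime_iff_eq hp hq.1.1).mp hpq)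
      exact hq.2 (this ▸ hpA)
    have : p ∣ T * C := (Nat.dvd_add_right hpA).mp hpm
    rcases hp.dvd_mul.mp this with h' | h'
    · exact hpT h'
    · exact hpC h'
  · have hpT : p ∣ T := by
      rw [hT]
      refine Finset.dvd_prod_of_mem id ?_
      simp only [Finset.mem_filter, Nat.mem_primeFactors]
      exact ⟨⟨hp, hpd, hd.ne'⟩, hpA⟩
    have : p ∣ A := by
      have := Nat.dvd_sub hpm (hpT.mul_right C)
      simpa using this
    exact hpA this

/-- The diagonal matrix diag(u, v) with u*v = 1 as a product of elementary matrices. -/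
lemma diag_mem {H : Subgroup (Matrix.SpecialLinearGroup (Fin 2) R)}
    (hE : ∀ x : R, eE x ∈ H) (hF : ∀ x : R, eF x ∈ H) (u v : R) (huv : u * v = 1) :
    (⟨!![u, 0; 0, v], by simp [Matrix.det_fin_two_of, huv]⟩ :
      Matrix.SpecialLinearGroup (Fin 2) R) ∈ H := by
  have key : (⟨!![u, 0; 0, v], by simp [Matrix.det_fin_two_of, huv]⟩ :
      Matrix.SpecialLinearGroup (Fin 2) R) =
      eE u * eF (-v) * eE u * (eE (-1) * eF 1 * eE (-1)) := by
    apply Subtype.ext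
    show !![u,0;0,v] = !![1,u;0,1] * !![1,0;-v,1] * !![1,u;0,1] *
      (!![1,-1;0,1] * !![1,0;1,1] * !![1,-1;0,1])
    simp only [Matrix.mul_fin_two]
    norm_num
    exact ⟨⟨by linear_combination (-u) * huv, by linear_combination -huv⟩,
      by linear_combination huv⟩
  rw [key]
  exact mul_mem (mul_mem (mul_mem (hE u) (hF (-v))) (hE u))
    (mul_mem (mul_mem (hE (-1)) (hF 1)) (hE (-1)))

lemma mem_of_forall_elem {H : Subgroup (Matrix.SpecialLinearGroup (Fin 2) R)}
    (hE : ∀ x : R, eE x ∈ H) (hF : ∀ x : R, eF x ∈ H)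
    (M : Matrix.SpecialLinearGroup (Fin 2) R)
    (hex : ∀ a c : R, IsCoprime a c → ∃ t : R, IsUnit (a + t * c)) : M ∈ H := by
  set a := (M : Matrix (Fin 2) (Fin 2) R) 0 0 with ha
  set b := (M : Matrix (Fin 2) (Fin 2) R) 0 1 with hb
  set c := (M : Matrix (Fin 2) (Fin 2) R) 1 0 with hc
  set e := (M : Matrix (Fin 2) (Fin 2) R) 1 1 with he
  have hdet : a * e - b * c = 1 := by
    have := M.2
    rwa [Matrix.det_fin_two] at this
  obtain ⟨t, hu⟩ := hex a c ⟨e, -b, by linear_combination hdet⟩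
  obtain ⟨v, hv⟩ := hu.exists_right_inv
  set D : Matrix.SpecialLinearGroup (Fin 2) R :=
    ⟨!![a + t * c, 0; 0, v], by simp [Matrix.det_fin_two_of, hv]⟩ with hD
  have hdiag : D ∈ H := diag_mem hE hF (a + t * c) v hv
  have key : M = (eE t)⁻¹ * ((eF (-(c*v)))⁻¹ * ((eE (-((b+t*e)*(a+t*c))))⁻¹ * D)) := by
    rw [eE_inv, eF_inv, eE_inv, neg_neg, neg_neg]
    apply Subtype.ext
    have hM : (M : Matrix (Fin 2) (Fin 2) R) = !![a, b; c, e] := Matrix.eta_fin_two _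
    show (M : Matrix (Fin 2) (Fin 2) R) =
      !![1,-t;0,1] * (!![1,0;c*v,1] * (!![1,(b+t*e)*(a+t*c);0,1] * !![a+t*c,0;0,v]))
    rw [hM]
    simp only [Matrix.mul_fin_two]
    norm_num
    rw [show a + t * c + -(t * (c * v * (a + t * c))) = a from by
        linear_combination (-(t*c)) * hv,
      show (b + t * e) * (a + t * c) * v + -(t * (c * v * ((b + t * e) * (a + t * c) * v) + v))
          = b from by linear_combination (b - t*c*v*(b+t*e)) * hv + (t*v) * hdet,
      show c * v * (a + t * c) = c from by linear_combination c * hv,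
      show c * v * ((b + t * e) * (a + t * c) * v) + v = e from by
        linear_combination (c*v*(b+t*e) + e) * hv + (-v) * hdet]
    exact ⟨⟨rfl, rfl⟩, rfl, rfl⟩
  rw [key]
  exact mul_mem (inv_mem (hE t)) (mul_mem (inv_mem (hF _)) (mul_mem (inv_mem (hE _)) hdiag))

end LubAux



theorem stmt4 (d : ℕ) (hd : 0 < d) (hsf : Squarefree d) (hd3 : ¬ (3 ∣ d)) :
    Function.Surjective
      (fun γ : lubotzkyGroup =>
        Matrix.SpecialLinearGroup.map (Int.castRingHom (ZMod d))
          (γ : Matrix.SpecialLinearGroup (Fin 2) ℤ)) := by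
  haveI : NeZero d := ⟨hd.ne'⟩
  set f := Matrix.SpecialLinearGroup.map (n := Fin 2) (Int.castRingHom (ZMod d)) with hf
  set H : Subgroup (Matrix.SpecialLinearGroup (Fin 2) (ZMod d)) :=
    lubotzkyGroup.map f with hH
  have h3 : IsUnit (3 : ZMod d) := by
    have : ((3 : ℕ) : ZMod d) = (3 : ZMod d) := by push_cast; ring
    rw [← this, ZMod.isUnit_iff_coprime]
    exact (Nat.Prime.coprime_iff_not_dvd Nat.prime_three).mpr hd3
  obtain ⟨w, hw⟩ := h3.exists_right_inv
  have hgen1 : f lubGen₁ = eE (3 : ZMod d) := by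
    apply Subtype.ext
    rw [hf, Matrix.SpecialLinearGroup.map_apply_coe]
    simp [hf, Matrix.SpecialLinearGroup.map, eE, lubGen₁]
    ext i j
    fin_cases i <;> fin_cases j <;> simp
  have hgen3 : f lubGen₃ = eF (3 : ZMod d) := by
    apply Subtype.ext
    rw [hf, Matrix.SpecialLinearGroup.map_apply_coe]
    simp [hf, Matrix.SpecialLinearGroup.map, eF, lubGen₃]
    ext i j
    fin_cases i <;> fin_cases j <;> simp
  have h1H : f lubGen₁ ∈ H := ⟨lubGen₁, Subgroup.subset_closure (by simp), rfl⟩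
  have h3H : f lubGen₃ ∈ H := ⟨lubGen₃, Subgroup.subset_closure (by simp), rfl⟩
  have hEmem : ∀ x : ZMod d, eE x ∈ H := by
    intro x
    obtain ⟨k, hk⟩ := ZMod.intCast_surjective (n := d) (w * x)
    have hx : eE x = (f lubGen₁) ^ k := by
      rw [hgen1, eE_zpow, hk]
      congr 1
      linear_combination (-x) * hw
    rw [hx]
    exact zpow_mem h1H k
  have hFmem : ∀ x : ZMod d, eF x ∈ H := by
    intro x
    obtain ⟨k, hk⟩ := ZMod.intCast_surjective (n := d) (w * x)
    have hx : eF x = (f lubGen₃) ^ k := by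
      rw [hgen3, eF_zpow, hk]
      congr 1
      linear_combination (-x) * hw
    rw [hx]
    exact zpow_mem h3H k
  intro x
  have hx : x ∈ H :=
    mem_of_forall_elem hEmem hFmem x (fun a c hcop => exists_add_mul_isUnit d hd hsf a c hcop)
  obtain ⟨γ, hγ, hfx⟩ := hx
  exact ⟨⟨γ, hγ⟩, hfx⟩
end

section
/- Let four circles in the Euclidean plane ℝ² have centers z₁, z₂, z₃, z₄ and radii r₁, r₂, r₃, r₄ > 0, and suppose they are pairwise externally tangent: for all i ≠ j, the distance between z_i and z_j equals r_i + r_j. Then the curvatures c_i = 1/r_i satisfy 2(c₁² + c₂² + c₃² + c₄²) = (c₁ + c₂ + c₃ + c₄)². -/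
lemma dist_sq_eq (p q : EuclideanSpace ℝ (Fin 2)) :
    (p 0 - q 0) ^ 2 + (p 1 - q 1) ^ 2 = dist p q ^ 2 := by
  rw [EuclideanSpace.dist_eq, Real.sq_sqrt (by positivity)]
  simp [Fin.sum_univ_two, Real.dist_eq, sq_abs]

set_option maxHeartbeats 4000000 in
theorem stmt15 (z : Fin 4 → EuclideanSpace ℝ (Fin 2)) (r : Fin 4 → ℝ)
    (hr : ∀ i, 0 < r i)
    (htan : ∀ i j : Fin 4, i ≠ j → dist (z i) (z j) = r i + r j) :
    2 * (∑ i, ((r i)⁻¹) ^ 2) = (∑ i, (r i)⁻¹) ^ 2 := by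
  have h : ∀ i j : Fin 4, i ≠ j →
      (z i 0 - z j 0) ^ 2 + (z i 1 - z j 1) ^ 2 = (r i + r j) ^ 2 := by
    intro i j hij
    rw [dist_sq_eq, htan i j hij]
  have h01 := h 0 1 (by decide)
  have h02 := h 0 2 (by decide)
  have h03 := h 0 3 (by decide)
  have h12 := h 1 2 (by decide)
  have h13 := h 1 3 (by decide)
  have h23 := h 2 3 (by decide)
  have key :
      - 2*(((z 1 0 - z 2 0) ^ 2 + (z 1 1 - z 2 1) ^ 2))*(((z 1 0 - z 3 0) ^ 2 + (z 1 1 - z 3 1) ^ 2))*(((z 2 0 - z 3 0) ^ 2 + (z 2 1 - z 3 1) ^ 2))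
      + 2*(((z 0 0 - z 3 0) ^ 2 + (z 0 1 - z 3 1) ^ 2))*(((z 1 0 - z 2 0) ^ 2 + (z 1 1 - z 2 1) ^ 2))*(((z 2 0 - z 3 0) ^ 2 + (z 2 1 - z 3 1) ^ 2))
      + 2*(((z 0 0 - z 3 0) ^ 2 + (z 0 1 - z 3 1) ^ 2))*(((z 1 0 - z 2 0) ^ 2 + (z 1 1 - z 2 1) ^ 2))*(((z 1 0 - z 3 0) ^ 2 + (z 1 1 - z 3 1) ^ 2))
      - 2*(((z 0 0 - z 3 0) ^ 2 + (z 0 1 - z 3 1) ^ 2))*(((z 1 0 - z 2 0) ^ 2 + (z 1 1 - z 2 1) ^ 2))*(((z 1 0 - z 2 0) ^ 2 + (z 1 1 - z 2 1) ^ 2))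
      - 2*(((z 0 0 - z 3 0) ^ 2 + (z 0 1 - z 3 1) ^ 2))*(((z 0 0 - z 3 0) ^ 2 + (z 0 1 - z 3 1) ^ 2))*(((z 1 0 - z 2 0) ^ 2 + (z 1 1 - z 2 1) ^ 2))
      + 2*(((z 0 0 - z 2 0) ^ 2 + (z 0 1 - z 2 1) ^ 2))*(((z 1 0 - z 3 0) ^ 2 + (z 1 1 - z 3 1) ^ 2))*(((z 2 0 - z 3 0) ^ 2 + (z 2 1 - z 3 1) ^ 2))
      - 2*(((z 0 0 - z 2 0) ^ 2 + (z 0 1 - z 2 1) ^ 2))*(((z 1 0 - z 3 0) ^ 2 + (z 1 1 - z 3 1) ^ 2))*(((z 1 0 - z 3 0) ^ 2 + (z 1 1 - z 3 1) ^ 2))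
      + 2*(((z 0 0 - z 2 0) ^ 2 + (z 0 1 - z 2 1) ^ 2))*(((z 1 0 - z 2 0) ^ 2 + (z 1 1 - z 2 1) ^ 2))*(((z 1 0 - z 3 0) ^ 2 + (z 1 1 - z 3 1) ^ 2))
      - 2*(((z 0 0 - z 2 0) ^ 2 + (z 0 1 - z 2 1) ^ 2))*(((z 0 0 - z 3 0) ^ 2 + (z 0 1 - z 3 1) ^ 2))*(((z 2 0 - z 3 0) ^ 2 + (z 2 1 - z 3 1) ^ 2))
      + 2*(((z 0 0 - z 2 0) ^ 2 + (z 0 1 - z 2 1) ^ 2))*(((z 0 0 - z 3 0) ^ 2 + (z 0 1 - z 3 1) ^ 2))*(((z 1 0 - z 3 0) ^ 2 + (z 1 1 - z 3 1) ^ 2))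
      + 2*(((z 0 0 - z 2 0) ^ 2 + (z 0 1 - z 2 1) ^ 2))*(((z 0 0 - z 3 0) ^ 2 + (z 0 1 - z 3 1) ^ 2))*(((z 1 0 - z 2 0) ^ 2 + (z 1 1 - z 2 1) ^ 2))
      - 2*(((z 0 0 - z 2 0) ^ 2 + (z 0 1 - z 2 1) ^ 2))*(((z 0 0 - z 2 0) ^ 2 + (z 0 1 - z 2 1) ^ 2))*(((z 1 0 - z 3 0) ^ 2 + (z 1 1 - z 3 1) ^ 2))
      - 2*(((z 0 0 - z 1 0) ^ 2 + (z 0 1 - z 1 1) ^ 2))*(((z 2 0 - z 3 0) ^ 2 + (z 2 1 - z 3 1) ^ 2))*(((z 2 0 - z 3 0) ^ 2 + (z 2 1 - z 3 1) ^ 2))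
      + 2*(((z 0 0 - z 1 0) ^ 2 + (z 0 1 - z 1 1) ^ 2))*(((z 1 0 - z 3 0) ^ 2 + (z 1 1 - z 3 1) ^ 2))*(((z 2 0 - z 3 0) ^ 2 + (z 2 1 - z 3 1) ^ 2))
      + 2*(((z 0 0 - z 1 0) ^ 2 + (z 0 1 - z 1 1) ^ 2))*(((z 1 0 - z 2 0) ^ 2 + (z 1 1 - z 2 1) ^ 2))*(((z 2 0 - z 3 0) ^ 2 + (z 2 1 - z 3 1) ^ 2))
      + 2*(((z 0 0 - z 1 0) ^ 2 + (z 0 1 - z 1 1) ^ 2))*(((z 0 0 - z 3 0) ^ 2 + (z 0 1 - z 3 1) ^ 2))*(((z 2 0 - z 3 0) ^ 2 + (z 2 1 - z 3 1) ^ 2))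
      - 2*(((z 0 0 - z 1 0) ^ 2 + (z 0 1 - z 1 1) ^ 2))*(((z 0 0 - z 3 0) ^ 2 + (z 0 1 - z 3 1) ^ 2))*(((z 1 0 - z 3 0) ^ 2 + (z 1 1 - z 3 1) ^ 2))
      + 2*(((z 0 0 - z 1 0) ^ 2 + (z 0 1 - z 1 1) ^ 2))*(((z 0 0 - z 3 0) ^ 2 + (z 0 1 - z 3 1) ^ 2))*(((z 1 0 - z 2 0) ^ 2 + (z 1 1 - z 2 1) ^ 2))
      + 2*(((z 0 0 - z 1 0) ^ 2 + (z 0 1 - z 1 1) ^ 2))*(((z 0 0 - z 2 0) ^ 2 + (z 0 1 - z 2 1) ^ 2))*(((z 2 0 - z 3 0) ^ 2 + (z 2 1 - z 3 1) ^ 2))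
      + 2*(((z 0 0 - z 1 0) ^ 2 + (z 0 1 - z 1 1) ^ 2))*(((z 0 0 - z 2 0) ^ 2 + (z 0 1 - z 2 1) ^ 2))*(((z 1 0 - z 3 0) ^ 2 + (z 1 1 - z 3 1) ^ 2))
      - 2*(((z 0 0 - z 1 0) ^ 2 + (z 0 1 - z 1 1) ^ 2))*(((z 0 0 - z 2 0) ^ 2 + (z 0 1 - z 2 1) ^ 2))*(((z 1 0 - z 2 0) ^ 2 + (z 1 1 - z 2 1) ^ 2))
      - 2*(((z 0 0 - z 1 0) ^ 2 + (z 0 1 - z 1 1) ^ 2))*(((z 0 0 - z 1 0) ^ 2 + (z 0 1 - z 1 1) ^ 2))*(((z 2 0 - z 3 0) ^ 2 + (z 2 1 - z 3 1) ^ 2))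
      = 0 := by ring
  rw [h01, h02, h03, h12, h13, h23] at key
  have hP : 2 * ((r 1 * r 2 * r 3) ^ 2 + (r 0 * r 2 * r 3) ^ 2 + (r 0 * r 1 * r 3) ^ 2
        + (r 0 * r 1 * r 2) ^ 2)
      = (r 1 * r 2 * r 3 + r 0 * r 2 * r 3 + r 0 * r 1 * r 3 + r 0 * r 1 * r 2) ^ 2 := by
    linear_combination (-1/32 : ℝ) * key
  have h0 := (hr 0).ne'
  have h1 := (hr 1).ne'
  have h2 := (hr 2).ne'
  have h3 := (hr 3).ne'
  simp only [Fin.sum_univ_four]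
  field_simp
  linear_combination hP
end
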